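/- There exists N₀ such that the following holds for every integer N ≥ N₀ with gcd(N, 6) = 1, every finite additive abelian group G of cardinality N, every useful pair (S, k) with S ⊆ G, and every dissociated set X ⊆ S with |X| = k which has lack of structure with respect to S: the number of subsets A ⊆ G with E[X] ⊆ A for which there exists a dissociated set Y ⊆ S with |Y| = k, Y ≠ X, E[Y] ⊆ A and |E[X] ∩ E[Y]| = 1 is at most (1/10)·2^(N − C(k,2)). (Note that since X is dissociated, the number of subsets A ⊆ G with E[X] ⊆ A equals 2^(N − C(k,2)).) -/

import Mathlib

open Finset

/-- The restricted sumset `E[X] = X +̂ X = {x + x' : x, x' ∈ X, x ≠ x'}`. -/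
def EHat {G : Type*} [AddCommGroup G] [DecidableEq G] (X : Finset G) : Finset G :=
  ((X ×ˢ X).filter fun p => p.1 ≠ p.2).image fun p => p.1 + p.2

/-- The number of quadruples `(x₁, x₂, s₁, s₂) ∈ X × X × S × S` with `x₁ ≠ x₂`,
`s₁ ≠ s₂` and `x₁ + x₂ = s₁ + s₂`. -/
def quadCount {G : Type*} [AddCommGroup G] [DecidableEq G] (X S : Finset G) : ℕ :=
  (((X ×ˢ X) ×ˢ (S ×ˢ S)).filter fun q =>
    q.1.1 ≠ q.1.2 ∧ q.2.1 ≠ q.2.2 ∧ q.1.1 + q.1.2 = q.2.1 + q.2.2).card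

/-- `X` has lack of structure with respect to `S` (in a group of cardinality `N`). -/
def LackOfStructure {G : Type*} [AddCommGroup G] [DecidableEq G]
    (X S : Finset G) (N : ℕ) : Prop :=
  (quadCount X S : ℝ) ≤ (S.card : ℝ) / Real.log N ^ 15

/-- A pair `(S, k)` is useful. -/
def Useful {G : Type*} [AddCommGroup G] [Fintype G] [DecidableEq G]
    (S : Finset G) (k : ℕ) : Prop :=
  -- (i) cardinality
  ((Fintype.card G : ℝ) / (2 ^ 12 * Real.log (Fintype.card G) ^ 20) < (S.card : ℝ) ∧
    (S.card : ℝ) ≤ (Fintype.card G : ℝ) / Real.log (Fintype.card G) ^ 20) ∧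
  -- (ii) good clique size
  (Real.logb 2 (Fintype.card G) ≤ (k : ℝ) ∧
    (k : ℝ) ≤ 3 * Real.logb 2 (Fintype.card G) ∧
    (Fintype.card G : ℝ) / (2 * Real.log (Fintype.card G) ^ 8) <
      (S.card.choose k : ℝ) * 2 ^ (-(k.choose 2 : ℤ)) ∧
    (S.card.choose k : ℝ) * 2 ^ (-(k.choose 2 : ℤ)) ≤
      (Fintype.card G : ℝ) / Real.log (Fintype.card G) ^ 8) ∧
  -- (iii) lack of structure for at least 90% of k-element subsets of S
  9 * (S.powersetCard k).card ≤
    10 * Nat.card {X : Finset G // X ⊆ S ∧ X.card = k ∧ LackOfStructure X S (Fintype.card G)}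

/-- A set `X` is dissociated: any two representations of an element as a sum of four
elements of `X` agree up to permutation. -/
def Dissociated {G : Type*} [AddCommGroup G] (X : Finset G) : Prop :=
  ∀ x₁ x₂ x₃ x₄ y₁ y₂ y₃ y₄ : G, x₁ ∈ X → x₂ ∈ X → x₃ ∈ X → x₄ ∈ X →
    y₁ ∈ X → y₂ ∈ X → y₃ ∈ X → y₄ ∈ X →
    x₁ + x₂ + x₃ + x₄ = y₁ + y₂ + y₃ + y₄ →
    ({x₁, x₂, x₃, x₄} : Multiset G) = {y₁, y₂, y₃, y₄}

set_option linter.unusedSectionVars false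

variable {G : Type*} [AddCommGroup G] [DecidableEq G]

lemma pair_multiset_eq {a b c d : G} (h : ({a, b} : Multiset G) = {c, d}) :
    (a = c ∧ b = d) ∨ (a = d ∧ b = c) := by
  simp only [Multiset.insert_eq_cons] at h
  rw [Multiset.cons_eq_cons] at h
  rcases h with ⟨rfl, h⟩ | ⟨hne, cs, h1, h2⟩
  · exact Or.inl ⟨rfl, by simpa using h⟩
  · have hcs : cs = 0 := by
      have := congrArg Multiset.card h1
      simpa using this
    subst hcs
    simp only [Multiset.cons_zero, Multiset.singleton_inj] at h1 h2
    exact Or.inr ⟨h2.symm, h1⟩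

lemma dissoc_pair_sum {X : Finset G} (hX : Dissociated X) {g x1 x2 y1 y2 : G}
    (hg : g ∈ X) (h1 : x1 ∈ X) (h2 : x2 ∈ X) (h3 : y1 ∈ X) (h4 : y2 ∈ X)
    (h : x1 + x2 = y1 + y2) : ({x1, x2} : Multiset G) = {y1, y2} := by
  have key := hX x1 x2 g g y1 y2 g g h1 h2 hg hg h3 h4 hg hg
    (by rw [show x1+x2+g+g = (x1+x2)+(g+g) by abel, h]; abel)
  have e1 : ({x1, x2, g, g} : Multiset G) = ({x1, x2} : Multiset G) + {g, g} := by rfl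
  have e2 : ({y1, y2, g, g} : Multiset G) = ({y1, y2} : Multiset G) + {g, g} := by rfl
  rw [e1, e2] at key
  exact add_right_cancel key

lemma two_mul_choose_two (k : ℕ) : 2 * k.choose 2 = k * (k - 1) := by
  rw [Nat.choose_two_right]
  have he : 2 ∣ k * (k - 1) := by
    rcases k with _ | m
    · simp
    · simpa [Nat.mul_comm] using (Nat.even_mul_succ_self m).two_dvd
  exact Nat.mul_div_cancel' he

lemma ehat_eq_image_offDiag (X : Finset G) :
    EHat X = X.offDiag.image (fun p => p.1 + p.2) := by
  ext b; simp only [EHat, mem_image, mem_filter, Finset.mem_product, Finset.mem_offDiag, and_assoc]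

lemma mem_ehat {X : Finset G} {b : G} :
    b ∈ EHat X ↔ ∃ a ∈ X, ∃ c ∈ X, a ≠ c ∧ a + c = b := by
  simp only [EHat, mem_image, mem_filter, Finset.mem_product, Prod.exists]
  constructor
  · rintro ⟨a, c, ⟨⟨ha, hc⟩, hne⟩, rfl⟩; exact ⟨a, ha, c, hc, hne, rfl⟩
  · rintro ⟨a, ha, c, hc, hne, rfl⟩; exact ⟨a, c, ⟨⟨ha, hc⟩, hne⟩, rfl⟩

lemma ehat_card {X : Finset G} (hX : Dissociated X) (hne : X.Nonempty) :
    (EHat X).card = X.card.choose 2 := by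
  obtain ⟨g, hg⟩ := hne
  have key : X.offDiag.card = ∑ b ∈ EHat X, ((X.offDiag.filter (fun p => p.1 + p.2 = b)).card) := by
    apply Finset.card_eq_sum_card_fiberwise
    intro p hp
    rw [Finset.mem_coe, Finset.mem_offDiag] at hp
    exact mem_ehat.2 ⟨p.1, hp.1, p.2, hp.2.1, hp.2.2, rfl⟩
  have hfib : ∀ b ∈ EHat X, (X.offDiag.filter (fun p => p.1 + p.2 = b)).card = 2 := by
    intro b hb
    obtain ⟨a, ha, c, hc, hac, rfl⟩ := mem_ehat.1 hb
    have : X.offDiag.filter (fun p => p.1 + p.2 = a + c) = {(a, c), (c, a)} := by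
      ext ⟨p1, p2⟩
      simp only [mem_filter, Finset.mem_offDiag, mem_insert, mem_singleton, Prod.mk.injEq]
      constructor
      · rintro ⟨⟨hp1, hp2, hpne⟩, hsum⟩
        have := pair_multiset_eq (dissoc_pair_sum hX hg hp1 hp2 ha hc hsum)
        tauto
      · rintro (⟨rfl, rfl⟩ | ⟨rfl, rfl⟩)
        · exact ⟨⟨ha, hc, hac⟩, rfl⟩
        · exact ⟨⟨hc, ha, fun h => hac h.symm⟩, by abel⟩
    rw [this, card_insert_of_notMem (by simp [Prod.ext_iff]; tauto), card_singleton]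
  rw [Finset.sum_congr rfl hfib, Finset.sum_const, smul_eq_mul, Finset.offDiag_card] at key
  have h2 := two_mul_choose_two X.card
  have hkk : X.card * X.card - X.card = X.card * (X.card - 1) := by
    rcases Nat.eq_zero_or_pos X.card with h | h
    · simp [h]
    · rw [Nat.mul_sub, Nat.mul_one]
  omega

lemma card_superset_le [Fintype G] (T : Finset G) :
    (univ.filter fun A : Finset G => T ⊆ A).card ≤ 2 ^ (Fintype.card G - T.card) := by
  have h1 : (univ.filter fun A : Finset G => T ⊆ A).card ≤ Tᶜ.powerset.card := by
    apply Finset.card_le_card_of_injOn (fun A => A \ T)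
    · intro A hA
      simp only [coe_filter] at hA
      simp only [mem_coe, mem_powerset]
      intro x hx
      simp only [mem_sdiff] at hx
      simp [hx.2]
    · intro A hA B hB hAB
      simp only [coe_filter, Set.mem_setOf_eq, mem_univ, true_and] at hA hB
      have : A \ T ∪ T = B \ T ∪ T := by dsimp only at hAB; rw [hAB]
      rwa [Finset.sdiff_union_of_subset hA, Finset.sdiff_union_of_subset hB] at this
  rw [Finset.card_powerset, Finset.card_compl] at h1
  exact h1

lemma two_mul_pairs_le_quad (X S : Finset G) :
    2 * ((S ×ˢ S).filter fun p => p.1 ≠ p.2 ∧ p.1 + p.2 ∈ EHat X).card ≤ quadCount X S := by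
  classical
  set Q := ((X ×ˢ X) ×ˢ (S ×ˢ S)).filter (fun q =>
    q.1.1 ≠ q.1.2 ∧ q.2.1 ≠ q.2.2 ∧ q.1.1 + q.1.2 = q.2.1 + q.2.2) with hQ
  set P := (S ×ˢ S).filter (fun p => p.1 ≠ p.2 ∧ p.1 + p.2 ∈ EHat X) with hP
  have key : Q.card = ∑ b ∈ P, (Q.filter (fun q => q.2 = b)).card := by
    apply Finset.card_eq_sum_card_fiberwise
    intro q hq
    simp only [hQ, mem_coe, mem_filter, Finset.mem_product] at hq
    simp only [hP, mem_coe, mem_filter, Finset.mem_product]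
    exact ⟨hq.1.2, hq.2.2.1, hq.2.2.2 ▸ mem_ehat.2 ⟨q.1.1, hq.1.1.1, q.1.2, hq.1.1.2, hq.2.1, rfl⟩⟩
  have hfib : ∀ b ∈ P, 2 ≤ (Q.filter (fun q => q.2 = b)).card := by
    intro b hb
    simp only [hP, mem_filter, Finset.mem_product] at hb
    obtain ⟨⟨hb1, hb2⟩, hbne, hbE⟩ := hb
    obtain ⟨a, ha, c, hc, hac, hsum⟩ := mem_ehat.1 hbE
    have hsub : ({((a, c), b), ((c, a), b)} : Finset ((G × G) × G × G)) ⊆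
        Q.filter (fun q => q.2 = b) := by
      intro q hq
      simp only [mem_insert, mem_singleton] at hq
      rcases hq with rfl | rfl
      · exact mem_filter.2 ⟨mem_filter.2 ⟨Finset.mem_product.2 ⟨Finset.mem_product.2 ⟨ha, hc⟩,
          Finset.mem_product.2 ⟨hb1, hb2⟩⟩, hac, hbne, hsum⟩, rfl⟩
      · exact mem_filter.2 ⟨mem_filter.2 ⟨Finset.mem_product.2 ⟨Finset.mem_product.2 ⟨hc, ha⟩,
          Finset.mem_product.2 ⟨hb1, hb2⟩⟩, fun h => hac h.symm, hbne,
          (add_comm c a).trans hsum⟩, rfl⟩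
    have hcard : ({((a, c), b), ((c, a), b)} : Finset ((G × G) × G × G)).card = 2 := by
      rw [card_insert_of_notMem (by simp [Prod.ext_iff]; tauto), card_singleton]
    calc 2 = ({((a, c), b), ((c, a), b)} : Finset ((G × G) × G × G)).card := hcard.symm
      _ ≤ _ := Finset.card_le_card hsub
  calc 2 * P.card = ∑ _b ∈ P, 2 := by rw [Finset.sum_const, smul_eq_mul, Nat.mul_comm]
    _ ≤ ∑ b ∈ P, (Q.filter (fun q => q.2 = b)).card := Finset.sum_le_sum hfib
    _ = Q.card := key.symm

lemma Ycard_le (X S : Finset G) (k : ℕ) (𝒴 : Finset (Finset G))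
    (h𝒴 : ∀ Y ∈ 𝒴, Y ⊆ S ∧ Y.card = k ∧ 1 ≤ (EHat X ∩ EHat Y).card) :
    𝒴.card ≤ ((S ×ˢ S).filter fun p => p.1 ≠ p.2 ∧ p.1 + p.2 ∈ EHat X).card *
      S.card.choose (k - 2) := by
  classical
  set P := (S ×ˢ S).filter (fun p => p.1 ≠ p.2 ∧ p.1 + p.2 ∈ EHat X) with hP
  have hex : ∀ Y ∈ 𝒴, ∃ p : G × G, p.1 ∈ Y ∧ p.2 ∈ Y ∧ p.1 ≠ p.2 ∧ p.1 + p.2 ∈ EHat X := by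
    intro Y hY
    obtain ⟨hYS, hYc, hY1⟩ := h𝒴 Y hY
    obtain ⟨s, hs⟩ := Finset.card_pos.1 hY1
    rw [mem_inter] at hs
    obtain ⟨a, ha, c, hc, hac, hsum⟩ := mem_ehat.1 hs.2
    exact ⟨(a, c), ha, hc, hac, hsum ▸ hs.1⟩
  set f : Finset G → (G × G) × Finset G := fun Y =>
    if h : ∃ p : G × G, p.1 ∈ Y ∧ p.2 ∈ Y ∧ p.1 ≠ p.2 ∧ p.1 + p.2 ∈ EHat X then
      (h.choose, Y \ {h.choose.1, h.choose.2}) else ((0, 0), ∅) with hf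
  have key : 𝒴.card ≤ (P ×ˢ S.powersetCard (k - 2)).card := by
    apply Finset.card_le_card_of_injOn f
    · intro Y hY
      obtain h := hex Y hY
      obtain ⟨hYS, hYc, -⟩ := h𝒴 Y hY
      obtain ⟨hp1, hp2, hpne, hpE⟩ := h.choose_spec
      have hsubp : ({h.choose.1, h.choose.2} : Finset G) ⊆ Y := by
        intro x hx; rcases mem_insert.1 hx with rfl | hx
        · exact hp1
        · exact (mem_singleton.1 hx) ▸ hp2
      have hfY : f Y = (h.choose, Y \ {h.choose.1, h.choose.2}) := dif_pos h
      rw [hfY, Finset.mem_coe, Finset.mem_product]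
      constructor
      · exact mem_filter.2 ⟨Finset.mem_product.2 ⟨hYS hp1, hYS hp2⟩, hpne, hpE⟩
      · rw [Finset.mem_powersetCard]
        refine ⟨(Finset.sdiff_subset).trans hYS, ?_⟩
        rw [Finset.card_sdiff_of_subset hsubp, hYc, Finset.card_insert_of_notMem (by simpa using hpne),
          Finset.card_singleton]
    · intro Y hY Y' hY' hff
      obtain h := hex Y hY
      obtain h' := hex Y' hY'
      simp only [Finset.mem_coe] at hY hY'
      have hfY : f Y = (h.choose, Y \ {h.choose.1, h.choose.2}) := dif_pos h
      have hfY' : f Y' = (h'.choose, Y' \ {h'.choose.1, h'.choose.2}) := dif_pos h'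
      rw [hfY, hfY', Prod.mk.injEq] at hff
      obtain ⟨hpp, hss⟩ := hff
      obtain ⟨hp1, hp2, -, -⟩ := h.choose_spec
      obtain ⟨hq1, hq2, -, -⟩ := h'.choose_spec
      have hsubp : ({h.choose.1, h.choose.2} : Finset G) ⊆ Y := by
        intro x hx; rcases mem_insert.1 hx with rfl | hx
        · exact hp1
        · exact (mem_singleton.1 hx) ▸ hp2
      have hsubq : ({h'.choose.1, h'.choose.2} : Finset G) ⊆ Y' := by
        intro x hx; rcases mem_insert.1 hx with rfl | hx
        · exact hq1
        · exact (mem_singleton.1 hx) ▸ hq2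
      have : Y \ {h.choose.1, h.choose.2} ∪ {h.choose.1, h.choose.2} =
          Y' \ {h'.choose.1, h'.choose.2} ∪ {h'.choose.1, h'.choose.2} := by
        rw [hss, hpp]
      rwa [Finset.sdiff_union_of_subset hsubp, Finset.sdiff_union_of_subset hsubq] at this
  rwa [Finset.card_product, Finset.card_powersetCard] at key

lemma choose_sub_two' (n m : ℕ) :
    n.choose m * ((n - m) * (n - (m + 1))) = n.choose (m + 2) * ((m + 2) * (m + 1)) := by
  have e1 := Nat.choose_succ_right_eq n m
  have e2 := Nat.choose_succ_right_eq n (m + 1)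
  calc n.choose m * ((n - m) * (n - (m + 1)))
      = (n.choose m * (n - m)) * (n - (m + 1)) := by ring
    _ = (n.choose (m + 1) * (m + 1)) * (n - (m + 1)) := by rw [← e1]
    _ = (n.choose (m + 1) * (n - (m + 1))) * (m + 1) := by ring
    _ = (n.choose (m + 2) * (m + 2)) * (m + 1) := by rw [← e2]
    _ = n.choose (m + 2) * ((m + 2) * (m + 1)) := by ring

set_option maxHeartbeats 8000000 in
theorem conditional_count_ell_eq_one :
    ∃ N₀ : ℕ, ∀ N : ℕ, N₀ ≤ N → Nat.gcd N 6 = 1 →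
      ∀ (G : Type) [AddCommGroup G] [Fintype G] [DecidableEq G], Fintype.card G = N →
        ∀ (S : Finset G) (k : ℕ), Useful S k →
          ∀ X : Finset G, X ⊆ S → X.card = k → Dissociated X → LackOfStructure X S N →
            (Nat.card {A : Finset G // EHat X ⊆ A ∧
              ∃ Y : Finset G, Y ⊆ S ∧ Dissociated Y ∧ Y.card = k ∧ Y ≠ X ∧
                EHat Y ⊆ A ∧ (EHat X ∩ EHat Y).card = 1} : ℝ) ≤
              (1 / 10) * 2 ^ ((N : ℤ) - (k.choose 2 : ℤ)) := by
  classical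
  refine ⟨2 ^ 100000000, ?_⟩
  intro N hN _hgcd G _ _ _ hcard S k hU X hXS hXk hXdis hXlos
  subst hcard
  obtain ⟨⟨hU1a, hU1b⟩, ⟨hU2a, hU2b, hU2c, hU2d⟩, -⟩ := hU
  -- notation
  set NN := Fintype.card G with hNN
  set R : ℝ := (NN : ℝ) with hR
  set L : ℝ := Real.log NN with hLdef
  set n : ℕ := S.card with hn
  set C2 : ℕ := k.choose 2 with hC2
  set rn : ℝ := (n : ℝ) with hrn
  set rk : ℝ := (k : ℝ) with hrk
  -- basic real facts
  have hRge : (2:ℝ) ^ (100000000:ℕ) ≤ R := by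
    rw [hR]; exact_mod_cast hN
  have hR1 : (1:ℝ) ≤ R := le_trans (one_le_pow₀ one_le_two) hRge
  have hRpos : (0:ℝ) < R := lt_of_lt_of_le one_pos hR1
  have hL0 : Real.log ((2:ℝ) ^ (100000000:ℕ)) ≤ L := by
    rw [hLdef]; exact Real.log_le_log (by positivity) hRge
  rw [Real.log_pow] at hL0
  have hL : (69314718:ℝ) ≤ L := by
    have h1 : (69314718:ℝ) ≤ (100000000:ℝ) * 0.6931471803 := by norm_num
    have h2 : (100000000:ℝ) * 0.6931471803 ≤ (100000000:ℝ) * Real.log 2 :=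
      mul_le_mul_of_nonneg_left (le_of_lt Real.log_two_gt_d9) (by norm_num)
    refine le_trans (le_trans h1 h2) (le_trans (le_of_eq ?_) hL0)
    push_cast; ring
  have hLpos : (0:ℝ) < L := by norm_num at hL ⊢; linarith [hL]
  have hsq : (44:ℝ) ^ 22 ≤ R ^ ((1:ℝ)/2) := by
    have h1 : ((2:ℝ) ^ (100000000:ℕ)) ^ ((1:ℝ)/2) ≤ R ^ ((1:ℝ)/2) :=
      Real.rpow_le_rpow (by positivity) hRge (by norm_num)
    have h2 : ((2:ℝ) ^ (100000000:ℕ)) ^ ((1:ℝ)/2) = (2:ℝ) ^ (50000000:ℕ) := by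
      rw [← Real.rpow_natCast 2 100000000, ← Real.rpow_mul (by norm_num : (0:ℝ) ≤ 2),
        ← Real.rpow_natCast 2 50000000]
      congr 1
      push_cast; norm_num
    have h3 : (44:ℝ) ^ 22 ≤ (2:ℝ) ^ (50000000:ℕ) := by
      calc (44:ℝ) ^ 22 ≤ (64:ℝ) ^ 22 := pow_le_pow_left₀ (by norm_num) (by norm_num) 22
        _ = (2:ℝ) ^ (132:ℕ) := by norm_num
        _ ≤ (2:ℝ) ^ (50000000:ℕ) := pow_le_pow_right₀ (by norm_num) (by norm_num)
    exact le_trans h3 (h2 ▸ h1)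
  clear hRge hL0 hN
  -- k bounds
  have hlogb : Real.logb 2 R = L / Real.log 2 := by rw [Real.logb, hLdef]
  have hlog2pos : (0:ℝ) < Real.log 2 := Real.log_pos one_lt_two
  have hkge : L ≤ rk := by
    have h1 : Real.log 2 ≤ 1 := by
      have := Real.log_le_sub_one_of_pos (by norm_num : (0:ℝ) < 2); linarith
    have h2 : L / Real.log 2 ≥ L := by
      rw [ge_iff_le, le_div_iff₀ hlog2pos]; nlinarith
    calc L ≤ L / Real.log 2 := h2
      _ = Real.logb 2 R := hlogb.symm
      _ ≤ rk := hU2a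
  have hkle : rk ≤ 5 * L := by
    have := Real.log_two_gt_d9
    have h2 : Real.logb 2 R ≤ L / 0.6931471803 := by
      rw [hlogb]; apply div_le_div_of_nonneg_left (Real.log_nonneg hR1) (by norm_num) (by linarith)
    calc rk ≤ 3 * Real.logb 2 R := hU2b
      _ ≤ 3 * (L / 0.6931471803) := by linarith
      _ ≤ 5 * L := by rw [div_eq_mul_inv]; nlinarith [Real.log_nonneg hR1]
  have hk2 : 2 ≤ k := by
    by_contra h
    push_neg at h
    have : rk ≤ 1 := by rw [hrk]; exact_mod_cast Nat.lt_succ_iff.1 h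
    linarith
  have hC2pos : 1 ≤ C2 := Nat.choose_pos hk2
  -- choose positivity → k ≤ n
  have hCkpos : (0:ℝ) < (n.choose k : ℝ) := by
    have hpow : (0:ℝ) < (2:ℝ) ^ (-(C2:ℤ)) := by positivity
    have h0 : (0:ℝ) < R / (2 * L ^ 8) := by positivity
    nlinarith [hU2c]
  have hkn : k ≤ n := by
    by_contra h
    push_neg at h
    rw [Nat.choose_eq_zero_of_lt h] at hCkpos
    simp at hCkpos
  -- L^22 ≤ R
  have hL22 : L ^ 22 ≤ R := by
    have hR0 : (0:ℝ) ≤ R := le_of_lt hRpos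
    have h44 : L ≤ 44 * R ^ ((1:ℝ)/44) := by
      have h := Real.log_le_rpow_div hR0 (by norm_num : (0:ℝ) < 1/44)
      rw [hLdef]
      calc Real.log R ≤ R ^ ((1:ℝ)/44) / (1/44) := h
        _ = 44 * R ^ ((1:ℝ)/44) := by ring
    have hLnn : (0:ℝ) ≤ L := le_of_lt hLpos
    have h22 : L ^ 22 ≤ (44 * R ^ ((1:ℝ)/44)) ^ 22 := pow_le_pow_left₀ hLnn h44 22
    have hrw : (44 * R ^ ((1:ℝ)/44)) ^ 22 = 44 ^ 22 * R ^ ((1:ℝ)/2) := by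
      rw [mul_pow, ← Real.rpow_natCast (R ^ ((1:ℝ)/44)) 22, ← Real.rpow_mul hR0]
      norm_num
    have hhalf : R ^ ((1:ℝ)/2) * R ^ ((1:ℝ)/2) = R := by
      rw [← Real.rpow_add hRpos]; norm_num
    have hrpos : (0:ℝ) < R ^ ((1:ℝ)/2) := Real.rpow_pos_of_pos hRpos _
    calc L ^ 22 ≤ 44 ^ 22 * R ^ ((1:ℝ)/2) := by rw [← hrw]; exact h22
      _ ≤ R ^ ((1:ℝ)/2) * R ^ ((1:ℝ)/2) := by nlinarith
      _ = R := hhalf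
  -- n bounds
  have hnlb : R / (2 ^ 12 * L ^ 20) < rn := hU1a
  have hnpos : (0:ℝ) < rn := lt_trans (by positivity) hnlb
  have hkn2 : rk ≤ rn / 2 := by
    have h1 : (40960:ℝ) * L ^ 21 ≤ R := by nlinarith [pow_pos hLpos 21]
    have h2 : 10 * L ≤ R / (2 ^ 12 * L ^ 20) := by
      rw [le_div_iff₀ (by positivity)]
      nlinarith [pow_pos hLpos 20]
    linarith
  -- X facts
  have hXne : X.Nonempty := Finset.card_pos.1 (by omega)
  have hEX : (EHat X).card = C2 := by rw [ehat_card hXdis hXne, hXk]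
  set 𝒴 : Finset (Finset G) := univ.filter (fun Y : Finset G =>
    Y ⊆ S ∧ Dissociated Y ∧ Y.card = k ∧ Y ≠ X ∧ (EHat X ∩ EHat Y).card = 1) with h𝒴def
  have h𝒴mem : ∀ Y ∈ 𝒴, Y ⊆ S ∧ Dissociated Y ∧ Y.card = k ∧ Y ≠ X ∧
      (EHat X ∩ EHat Y).card = 1 := by
    intro Y hY
    rw [h𝒴def, mem_filter] at hY
    exact hY.2
  have hEY : ∀ Y ∈ 𝒴, (EHat X ∪ EHat Y).card = 2 * C2 - 1 := by
    intro Y hY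
    obtain ⟨hYS, hYdis, hYk, hYne, hYint⟩ := h𝒴mem Y hY
    have hYnon : Y.Nonempty := Finset.card_pos.1 (by omega)
    have h1 : (EHat Y).card = C2 := by rw [ehat_card hYdis hYnon, hYk]
    have h2 := Finset.card_union_add_card_inter (EHat X) (EHat Y)
    rw [hEX, h1, hYint] at h2
    omega
  have hcount : (Nat.card {A : Finset G // EHat X ⊆ A ∧
      ∃ Y : Finset G, Y ⊆ S ∧ Dissociated Y ∧ Y.card = k ∧ Y ≠ X ∧
        EHat Y ⊆ A ∧ (EHat X ∩ EHat Y).card = 1}) ≤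
      𝒴.card * 2 ^ (NN - (2 * C2 - 1)) := by
    rw [Nat.card_eq_fintype_card, Fintype.card_subtype]
    have hsub : (univ.filter fun A : Finset G => EHat X ⊆ A ∧
        ∃ Y : Finset G, Y ⊆ S ∧ Dissociated Y ∧ Y.card = k ∧ Y ≠ X ∧
          EHat Y ⊆ A ∧ (EHat X ∩ EHat Y).card = 1) ⊆
        𝒴.biUnion fun Y => univ.filter fun A : Finset G => EHat X ∪ EHat Y ⊆ A := by
      intro A hA
      rw [mem_filter] at hA
      obtain ⟨-, hXA, Y, hYS, hYdis, hYk, hYne, hYA, hYint⟩ := hA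
      rw [Finset.mem_biUnion]
      refine ⟨Y, ?_, ?_⟩
      · rw [h𝒴def, mem_filter]
        exact ⟨mem_univ _, hYS, hYdis, hYk, hYne, hYint⟩
      · rw [mem_filter]
        exact ⟨mem_univ _, union_subset hXA hYA⟩
    calc (univ.filter fun A : Finset G => EHat X ⊆ A ∧
        ∃ Y : Finset G, Y ⊆ S ∧ Dissociated Y ∧ Y.card = k ∧ Y ≠ X ∧
          EHat Y ⊆ A ∧ (EHat X ∩ EHat Y).card = 1).card
        ≤ (𝒴.biUnion fun Y => univ.filter fun A : Finset G => EHat X ∪ EHat Y ⊆ A).card :=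
          Finset.card_le_card hsub
      _ ≤ ∑ Y ∈ 𝒴, (univ.filter fun A : Finset G => EHat X ∪ EHat Y ⊆ A).card :=
          Finset.card_biUnion_le
      _ ≤ ∑ _Y ∈ 𝒴, 2 ^ (NN - (2 * C2 - 1)) := by
          apply Finset.sum_le_sum
          intro Y hY
          have := card_superset_le (G := G) (EHat X ∪ EHat Y)
          rwa [hEY Y hY] at this
      _ = 𝒴.card * 2 ^ (NN - (2 * C2 - 1)) := by rw [Finset.sum_const, smul_eq_mul]
  rcases Finset.eq_empty_or_nonempty 𝒴 with h𝒴e | ⟨Y0, hY0⟩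
  · rw [h𝒴e] at hcount
    simp only [Finset.card_empty, Nat.zero_mul, Nat.le_zero] at hcount
    simp only [hcount, Nat.cast_zero]
    positivity
  -- nonempty case
  have h2C2N : 2 * C2 - 1 ≤ NN := by
    have h1 := hEY Y0 hY0
    have h2 : (EHat X ∪ EHat Y0).card ≤ NN := le_trans (Finset.card_le_univ _)
      (le_of_eq Finset.card_univ)
    omega
  -- counting Y's
  have hY1 : 𝒴.card ≤ ((S ×ˢ S).filter fun p => p.1 ≠ p.2 ∧ p.1 + p.2 ∈ EHat X).card *
      n.choose (k - 2) := by
    apply Ycard_le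
    intro Y hY
    obtain ⟨hYS, -, hYk, -, hYint⟩ := h𝒴mem Y hY
    exact ⟨hYS, hYk, by omega⟩
  have hP := two_mul_pairs_le_quad X S
  have hYQ : 2 * 𝒴.card ≤ quadCount X S * n.choose (k - 2) := by
    calc 2 * 𝒴.card ≤ 2 * (((S ×ˢ S).filter fun p => p.1 ≠ p.2 ∧ p.1 + p.2 ∈ EHat X).card *
          n.choose (k - 2)) := Nat.mul_le_mul_left 2 hY1
      _ = (2 * ((S ×ˢ S).filter fun p => p.1 ≠ p.2 ∧ p.1 + p.2 ∈ EHat X).card) *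
          n.choose (k - 2) := by ring
      _ ≤ quadCount X S * n.choose (k - 2) := Nat.mul_le_mul_right _ hP
  -- real quantities
  set a : ℝ := (𝒴.card : ℝ) with hadef
  set rq : ℝ := (quadCount X S : ℝ) with hrqdef
  set c2r : ℝ := (n.choose (k - 2) : ℝ) with hc2rdef
  set ckr : ℝ := (n.choose k : ℝ) with hckrdef
  set M : ℝ := (2:ℝ) ^ C2 with hMdef
  have hMpos : (0:ℝ) < M := by positivity
  have ha0 : (0:ℝ) ≤ a := Nat.cast_nonneg _
  have hc2r0 : (0:ℝ) ≤ c2r := Nat.cast_nonneg _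
  have hq0 : (0:ℝ) ≤ rq := Nat.cast_nonneg _
  have hrk0 : (0:ℝ) ≤ rk := Nat.cast_nonneg _
  have hq : rq ≤ rn / L ^ 15 := hXlos
  have hqL : rq * L ^ 15 ≤ rn := by
    rw [← le_div_iff₀ (by positivity : (0:ℝ) < L ^ 15)]; exact hq
  have c1 : 2 * a ≤ rq * c2r := by
    rw [hadef, hrqdef, hc2rdef]
    exact_mod_cast hYQ
  -- choose identity
  have hid : c2r * ((rn - rk + 2) * (rn - rk + 1)) = ckr * (rk * (rk - 1)) := by
    have h := choose_sub_two' n (k - 2)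
    rw [show k - 2 + 2 = k by omega, show k - 2 + 1 = k - 1 by omega] at h
    have hc := congrArg (Nat.cast : ℕ → ℝ) h
    push_cast [Nat.cast_sub (show k - 2 ≤ n by omega), Nat.cast_sub (show k - 1 ≤ n by omega),
      Nat.cast_sub (show 1 ≤ k by omega), Nat.cast_sub (show 2 ≤ k by omega)] at hc
    rw [hc2rdef, hckrdef]
    linear_combination hc
  have c2 : c2r * rn ^ 2 ≤ 4 * ckr * rk ^ 2 := by
    have f1 : rn / 2 ≤ rn - rk + 1 := by linarith
    have f2 : rn / 2 ≤ rn - rk + 2 := by linarith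
    have f0 : (0:ℝ) ≤ rn / 2 := by linarith
    have hprod : rn / 2 * (rn / 2) ≤ (rn - rk + 2) * (rn - rk + 1) :=
      mul_le_mul f2 f1 f0 (by linarith)
    have hmono : c2r * (rn / 2 * (rn / 2)) ≤ c2r * ((rn - rk + 2) * (rn - rk + 1)) :=
      mul_le_mul_of_nonneg_left hprod hc2r0
    have hck : ckr * (rk * (rk - 1)) ≤ ckr * rk ^ 2 :=
      mul_le_mul_of_nonneg_left (by linarith only [hrk0]) (le_of_lt hCkpos)
    have e : c2r * (rn / 2 * (rn / 2)) = c2r * rn ^ 2 / 4 := by ring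
    linarith only [hmono, hid, hck, e]
  have hCkL : ckr * L ^ 8 ≤ M * R := by
    have hzp : (2:ℝ) ^ (-(C2:ℤ)) = M⁻¹ := by rw [zpow_neg, zpow_natCast]
    have h := hU2d
    rw [hzp, ← div_eq_mul_inv, div_le_div_iff₀ hMpos (by positivity : (0:ℝ) < L ^ 8)] at h
    linarith only [h]
  have hrk25 : rk ^ 2 ≤ 25 * L ^ 2 := by
    have h1 : rk ^ 2 ≤ (5 * L) ^ 2 := pow_le_pow_left₀ hrk0 hkle 2
    have h2 : ((5:ℝ) * L) ^ 2 = 25 * L ^ 2 := by ring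
    linarith only [h1, h2]
  have hRrn : R ≤ 4096 * rn * L ^ 20 := by
    have h := hnlb
    rw [div_lt_iff₀ (by positivity)] at h
    have h2 : rn * (2 ^ 12 * L ^ 20) = 4096 * rn * L ^ 20 := by norm_num; ring
    linarith only [h, h2]
  have key : 2 * a * (rn ^ 2 * L ^ 23) ≤ 409600 * M * (rn ^ 2 * L ^ 22) := by
    calc 2 * a * (rn ^ 2 * L ^ 23)
        ≤ (rq * c2r) * (rn ^ 2 * L ^ 23) := mul_le_mul_of_nonneg_right c1 (by positivity)
      _ = (rq * L ^ 15) * (c2r * rn ^ 2) * L ^ 8 := by ring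
      _ ≤ rn * (c2r * rn ^ 2) * L ^ 8 := by
          apply mul_le_mul_of_nonneg_right _ (by positivity : (0:ℝ) ≤ L ^ 8)
          exact mul_le_mul_of_nonneg_right hqL (by positivity)
      _ ≤ rn * (4 * ckr * rk ^ 2) * L ^ 8 := by
          apply mul_le_mul_of_nonneg_right _ (by positivity : (0:ℝ) ≤ L ^ 8)
          exact mul_le_mul_of_nonneg_left c2 (le_of_lt hnpos)
      _ = 4 * rn * rk ^ 2 * (ckr * L ^ 8) := by ring
      _ ≤ 4 * rn * rk ^ 2 * (M * R) := mul_le_mul_of_nonneg_left hCkL (by positivity)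
      _ = (4 * rn * (M * R)) * rk ^ 2 := by ring
      _ ≤ (4 * rn * (M * R)) * (25 * L ^ 2) := mul_le_mul_of_nonneg_left hrk25 (by positivity)
      _ = (100 * rn * M * L ^ 2) * R := by ring
      _ ≤ (100 * rn * M * L ^ 2) * (4096 * rn * L ^ 20) :=
          mul_le_mul_of_nonneg_left hRrn (by positivity)
      _ = 409600 * M * (rn ^ 2 * L ^ 22) := by ring
  have key2 : 2 * a * L ≤ 409600 * M := by
    have hpos : (0:ℝ) < rn ^ 2 * L ^ 22 := by positivity
    refine le_of_mul_le_mul_right ?_ hpos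
    calc (2 * a * L) * (rn ^ 2 * L ^ 22) = 2 * a * (rn ^ 2 * L ^ 23) := by ring
      _ ≤ 409600 * M * (rn ^ 2 * L ^ 22) := key
      _ = (409600 * M) * (rn ^ 2 * L ^ 22) := by ring
  have hYfinal : a ≤ M / 20 := by
    rw [le_div_iff₀ (by norm_num : (0:ℝ) < 20)]
    have h1 : (0:ℝ) ≤ a * (L - 4096000) := mul_nonneg ha0 (by linarith only [hL])
    linarith only [key2, h1]
  -- final assembly
  have hcastcount : ((Nat.card {A : Finset G // EHat X ⊆ A ∧
      ∃ Y : Finset G, Y ⊆ S ∧ Dissociated Y ∧ Y.card = k ∧ Y ≠ X ∧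
        EHat Y ⊆ A ∧ (EHat X ∩ EHat Y).card = 1}) : ℝ) ≤
      a * (2:ℝ) ^ (NN - (2 * C2 - 1)) := by
    rw [hadef]
    exact_mod_cast hcount
  have hexp : ((2:ℝ) ^ (NN - (2 * C2 - 1)) : ℝ) = (2:ℝ) ^ ((NN:ℤ) - (2 * C2 - 1)) := by
    rw [← zpow_natCast]
    congr 1
    omega
  have hfin : a * (2:ℝ) ^ (NN - (2 * C2 - 1)) ≤
      (1 / 10) * 2 ^ ((NN:ℤ) - (C2:ℤ)) := by
    rw [hexp]
    have hMz : M * (2:ℝ) ^ ((NN:ℤ) - (2 * C2 - 1)) = 2 * (2:ℝ) ^ ((NN:ℤ) - (C2:ℤ)) := by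
      rw [hMdef, ← zpow_natCast (2:ℝ) C2, ← zpow_add₀ (two_ne_zero)]
      rw [show (C2:ℤ) + ((NN:ℤ) - (2 * C2 - 1)) = ((NN:ℤ) - (C2:ℤ)) + 1 by ring]
      rw [zpow_add₀ (two_ne_zero), zpow_one]
      ring
    have hzpos : (0:ℝ) < (2:ℝ) ^ ((NN:ℤ) - (2 * C2 - 1)) := by positivity
    calc a * (2:ℝ) ^ ((NN:ℤ) - (2 * C2 - 1))
        ≤ (M / 20) * (2:ℝ) ^ ((NN:ℤ) - (2 * C2 - 1)) :=
          mul_le_mul_of_nonneg_right hYfinal (le_of_lt hzpos)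
      _ = (1 / 10) * 2 ^ ((NN:ℤ) - (C2:ℤ)) := by
          rw [div_mul_eq_mul_div, hMz]; ring
  exact le_trans hcastcount hfin
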